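/- arXiv:1309.0725 — 2 statements merged into one kernel-verified Lean document; each statement's English description precedes it below -/
import Mathlib

section
/- Let n ≥ 2 be an even integer and let Q_n = conv(C_{n-1} × {0} ∪ {e_n, -e_n}) ⊂ ℝ^n be the bipyramid over the (n-1)-dimensional cube. Then ℓ_1(Q_n) = 2(n-1). -/
open MeasureTheory Polynomial Pointwise

/-- The number of integer lattice points contained in a subset of `ℝ^n`. -/
noncomputable def latticePointCount {n : ℕ} (S : Set (Fin n → ℝ)) : ℕ :=
  {v : Fin n → ℤ | (fun i => (v i : ℝ)) ∈ S}.ncard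

/-- A lattice polytope in `ℝ^n`: the convex hull of finitely many integer points. -/
def IsLatticePolytope {n : ℕ} (P : Set (Fin n → ℝ)) : Prop :=
  ∃ V : Finset (Fin n → ℤ),
    P = convexHull ℝ ((fun v : Fin n → ℤ => fun i => (v i : ℝ)) '' (V : Set (Fin n → ℤ)))

/-- `L` is the Ehrhart polynomial of `P`: for every positive integer `k` its value at `k`
is the number of lattice points of the dilate `kP`. -/
def IsEhrhartPoly {n : ℕ} (P : Set (Fin n → ℝ)) (L : Polynomial ℝ) : Prop :=
  ∀ k : ℕ, 0 < k → L.eval (k : ℝ) = latticePointCount ((k : ℝ) • P)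

/-- The bipyramid `Q_n = conv(C_{n-1} × {0} ∪ {e_n, -e_n})` over the cube
`C_{n-1} = [-1,1]^{n-1}`, sitting in `ℝ^n` (here `n ≥ 2`). -/
noncomputable def bipyramidQ (n : ℕ) (hn : 2 ≤ n) : Set (Fin n → ℝ) :=
  convexHull ℝ
    ({x : Fin n → ℝ | (∀ i, |x i| ≤ 1) ∧ x ⟨n - 1, by omega⟩ = 0} ∪
     {Pi.single (⟨n - 1, by omega⟩ : Fin n) (1 : ℝ),
      -Pi.single (⟨n - 1, by omega⟩ : Fin n) (1 : ℝ)})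

section Geom
variable (n : ℕ) (hn : 2 ≤ n)

lemma bipyramid_eq :
    bipyramidQ n hn =
      {x : Fin n → ℝ | ∀ i : Fin n, i ≠ ⟨n - 1, by omega⟩ → |x i| + |x ⟨n - 1, by omega⟩| ≤ 1} := by
  set l : Fin n := ⟨n - 1, by omega⟩ with hl
  have i0ne : (⟨0, by omega⟩ : Fin n) ≠ l := by
    simp only [hl, Fin.ne_iff_vne]; omega
  apply le_antisymm
  · apply convexHull_min
    · rintro x (⟨h1, h2⟩ | h)
      · intro i hi
        rw [h2, abs_zero, add_zero]; exact h1 i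
      · rcases h with h | h
        · subst h; intro i hi
          rw [Pi.single_eq_of_ne hi, Pi.single_eq_same]
          norm_num
        · subst h; intro i hi
          simp only [Pi.neg_apply, abs_neg]
          rw [Pi.single_eq_of_ne hi, Pi.single_eq_same]
          norm_num
    · intro x hx y hy a b ha hb hab i hi
      calc |(a • x + b • y) i| + |(a • x + b • y) l|
          ≤ (|a| * |x i| + |b| * |y i|) + (|a| * |x l| + |b| * |y l|) := by
            simp only [Pi.add_apply, Pi.smul_apply, smul_eq_mul]
            gcongr <;> exact (abs_add_le _ _).trans (by rw [abs_mul, abs_mul])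
        _ = a * (|x i| + |x l|) + b * (|y i| + |y l|) := by
            rw [abs_of_nonneg ha, abs_of_nonneg hb]; ring
        _ ≤ 1 := by
            have h1 := hx i hi
            have h2 := hy i hi
            nlinarith
  · intro x hx
    simp only [Set.mem_setOf_eq] at hx
    set t := x l with htdef
    have ht1 : |t| ≤ 1 := by
      have := hx ⟨0, by omega⟩ i0ne
      have := abs_nonneg (x ⟨0, by omega⟩)
      linarith
    set e : Fin n → ℝ := Pi.single l (1 : ℝ) with he
    have heS : e ∈ ({x : Fin n → ℝ | (∀ i, |x i| ≤ 1) ∧ x l = 0} ∪ {e, -e}) := by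
      right; left; rfl
    have hneS : -e ∈ ({x : Fin n → ℝ | (∀ i, |x i| ≤ 1) ∧ x l = 0} ∪ {e, -e}) := by
      right; right; rfl
    rcases eq_or_lt_of_le ht1 with habs1 | habs1
    · -- |t| = 1 : x = e or -e
      have hzero : ∀ i, i ≠ l → x i = 0 := by
        intro i hi
        have := hx i hi
        have := abs_nonneg (x i)
        have : |x i| = 0 := by linarith [abs_nonneg (x i)]
        exact abs_eq_zero.mp this
      rcases (abs_eq (by norm_num : (0:ℝ) ≤ 1)).mp habs1 with ht | ht
      · have hxe : x = e := by
          funext i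
          by_cases hi : i = l
          · subst hi; rw [he, Pi.single_eq_same]; exact ht
          · rw [hzero i hi, he, Pi.single_eq_of_ne hi]
        rw [bipyramidQ, hxe]; exact subset_convexHull ℝ _ heS
      · have hxe : x = -e := by
          funext i
          by_cases hi : i = l
          · subst hi
            simp only [Pi.neg_apply, he, Pi.single_eq_same]
            exact ht
          · rw [hzero i hi]
            simp [he, Pi.single_eq_of_ne hi]
        rw [bipyramidQ, hxe]; exact subset_convexHull ℝ _ hneS
    · -- |t| < 1
      set y : Fin n → ℝ := fun i => if i = l then 0 else x i / (1 - |t|) with hy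
      have hyS : y ∈ ({x : Fin n → ℝ | (∀ i, |x i| ≤ 1) ∧ x l = 0} ∪ {e, -e}) := by
        left
        constructor
        · intro i
          by_cases hi : i = l
          · simp [hy, hi]
          · have h := hx i hi
            have hpos : (0:ℝ) < 1 - |t| := by linarith
            simp only [hy]
            rw [if_neg hi, abs_div, abs_of_pos hpos, div_le_one hpos]
            linarith
        · simp [hy]
      set z : Fin n → ℝ := if 0 ≤ t then e else -e with hz
      have hzS : z ∈ ({x : Fin n → ℝ | (∀ i, |x i| ≤ 1) ∧ x l = 0} ∪ {e, -e}) := by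
        by_cases h0 : 0 ≤ t <;> simp only [hz, h0, if_true, if_false] <;> [exact heS; skip]
        simpa using hneS
      have hcomb : x = (1 - |t|) • y + |t| • z := by
        funext i
        by_cases hi : i = l
        · subst hi
          have hzl : z l = if 0 ≤ t then 1 else -1 := by
            by_cases h0 : 0 ≤ t <;> simp [hz, h0, he, Pi.single_eq_same]
          simp only [Pi.add_apply, Pi.smul_apply, smul_eq_mul, hzl]
          rw [show y l = 0 from by simp [hy], mul_zero, zero_add]
          by_cases h0 : 0 ≤ t
          · rw [if_pos h0, mul_one, abs_of_nonneg h0]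
          · rw [if_neg h0, abs_of_neg (not_le.mp h0), mul_neg_one, neg_neg]
        · have hzi : z i = 0 := by
            by_cases h0 : 0 ≤ t <;> simp [hz, h0, he, Pi.single_eq_of_ne hi]
          have hne : (1:ℝ) - |t| ≠ 0 := by
            have : |t| < 1 := habs1
            intro h; rw [sub_eq_zero] at h; linarith
          simp only [Pi.add_apply, Pi.smul_apply, smul_eq_mul, hy, if_neg hi, hzi, mul_zero,
            add_zero]
          rw [mul_comm, div_mul_cancel₀ _ hne]
      rw [bipyramidQ, hcomb]
      exact (convex_convexHull ℝ _) (subset_convexHull ℝ _ hyS) (subset_convexHull ℝ _ hzS)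
        (by linarith) (abs_nonneg t) (by ring)

end Geom

section Count
variable (n : ℕ) (hn : 2 ≤ n)

-- dilated H-description
lemma smul_H (k : ℕ) (hk : 0 < k) :
    (k : ℝ) • {x : Fin n → ℝ | ∀ i : Fin n, i ≠ ⟨n-1, by omega⟩ → |x i| + |x ⟨n-1, by omega⟩| ≤ 1}
      = {x : Fin n → ℝ | ∀ i : Fin n, i ≠ ⟨n-1, by omega⟩ →
          |x i| + |x ⟨n-1, by omega⟩| ≤ (k : ℝ)} := by
  set l : Fin n := ⟨n-1, by omega⟩
  have hkpos : (0:ℝ) < k := by exact_mod_cast hk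
  ext x
  rw [Set.mem_smul_set_iff_inv_smul_mem₀ (ne_of_gt hkpos)]
  simp only [Set.mem_setOf_eq, Pi.smul_apply, smul_eq_mul]
  constructor
  · intro h i hi
    have := h i hi
    rw [abs_mul, abs_mul, abs_inv, abs_of_pos hkpos] at this
    have h2 : (k:ℝ)⁻¹ * (|x i| + |x l|) ≤ 1 := by rw [mul_add]; exact this
    calc |x i| + |x l| = k * ((k:ℝ)⁻¹ * (|x i| + |x l|)) := by field_simp
    _ ≤ k * 1 := by gcongr
    _ = k := mul_one _
  · intro h i hi
    have := h i hi
    rw [abs_mul, abs_mul, abs_inv, abs_of_pos hkpos, ← mul_add]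
    rw [inv_mul_le_iff₀ hkpos, mul_one]
    exact this
end Count

section Count
variable (n : ℕ) (hn : 2 ≤ n)

lemma latticeSet_eq_finset (k : ℕ) :
    {v : Fin n → ℤ | ∀ i : Fin n, i ≠ ⟨n-1, by omega⟩ →
        |v i| + |v ⟨n-1, by omega⟩| ≤ (k : ℤ)}
      = ↑((Finset.Icc (fun _ => -(k:ℤ)) (fun _ => (k:ℤ))).filter
          (fun v => ∀ i : Fin n, i ≠ ⟨n-1, by omega⟩ →
            |v i| + |v ⟨n-1, by omega⟩| ≤ (k : ℤ))) := by
  set l : Fin n := ⟨n-1, by omega⟩ with hl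
  have i0ne : (⟨0, by omega⟩ : Fin n) ≠ l := by simp only [hl, Fin.ne_iff_vne]; omega
  ext v
  simp only [Set.mem_setOf_eq, Finset.coe_filter, Finset.mem_Icc, Pi.le_def]
  constructor
  · intro h
    have hvl : |v l| ≤ (k:ℤ) := by
      have := h _ i0ne
      have := abs_nonneg (v ⟨0, by omega⟩)
      omega
    rw [abs_le] at hvl
    refine ⟨⟨fun i => ?_, fun i => ?_⟩, h⟩ <;>
    · by_cases hi : i = l
      · subst hi; omega
      · have h1 := h i hi
        have h2 := abs_nonneg (v l)
        have h3 : |v i| ≤ (k:ℤ) := by omega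
        rw [abs_le] at h3
        omega
  · exact fun h => h.2

lemma card_filter_eq (k : ℕ) :
    ((Finset.Icc (fun _ => -(k:ℤ)) (fun _ => (k:ℤ))).filter
          (fun v => ∀ i : Fin n, i ≠ ⟨n-1, by omega⟩ →
            |v i| + |v ⟨n-1, by omega⟩| ≤ (k : ℤ))).card
      = ∑ t ∈ Finset.Icc (-(k:ℤ)) (k:ℤ), (2*((k:ℤ) - |t|)+1).toNat ^ (n-1) := by
  set l : Fin n := ⟨n-1, by omega⟩ with hl
  have i0ne : (⟨0, by omega⟩ : Fin n) ≠ l := by simp only [hl, Fin.ne_iff_vne]; omega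
  set F := (Finset.Icc (fun _ => -(k:ℤ)) (fun _ => (k:ℤ))).filter
          (fun v => ∀ i : Fin n, i ≠ l → |v i| + |v l| ≤ (k : ℤ)) with hF
  rw [Finset.card_eq_sum_card_fiberwise (f := fun v => v l)
      (t := Finset.Icc (-(k:ℤ)) (k:ℤ)) ?_]
  · apply Finset.sum_congr rfl
    intro t ht
    rw [Finset.mem_Icc] at ht
    have htk : |t| ≤ (k:ℤ) := abs_le.mpr ht
    have hfib : F.filter (fun v => v l = t)
        = Finset.Icc (fun i => if i = l then t else -((k:ℤ) - |t|))
            (fun i => if i = l then t else ((k:ℤ) - |t|)) := by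
      ext v
      simp only [hF, Finset.mem_filter, Finset.mem_Icc, Pi.le_def]
      constructor
      · rintro ⟨⟨-, hP⟩, hvl⟩
        refine ⟨fun i => ?_, fun i => ?_⟩ <;>
        · by_cases hi : i = l
          · subst hi; simp [hvl]
          · have h1 := hP i hi
            rw [hvl] at h1
            have h3 : |v i| ≤ (k:ℤ) - |t| := by omega
            rw [abs_le] at h3
            simp only [if_neg hi]
            omega
      · rintro ⟨hlo, hhi⟩
        have h1 := hlo l
        have h2 := hhi l
        rw [if_pos rfl] at h1 h2
        have hvl : v l = t := le_antisymm h2 h1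
        have hbound : ∀ i : Fin n, i ≠ l → -((k:ℤ) - |t|) ≤ v i ∧ v i ≤ (k:ℤ) - |t| := by
          intro i hi
          have h3 := hlo i
          have h4 := hhi i
          rw [if_neg hi] at h3 h4
          exact ⟨h3, h4⟩
        have habs : 0 ≤ |t| := abs_nonneg t
        refine ⟨⟨⟨fun i => ?_, fun i => ?_⟩, fun i hi => ?_⟩, hvl⟩
        · by_cases hi : i = l
          · subst hi; omega
          · have := hbound i hi; omega
        · by_cases hi : i = l
          · subst hi; omega
          · have := hbound i hi; omega
        · have h5 := hbound i hi
          have h6 : |v i| ≤ (k:ℤ) - |t| := abs_le.mpr h5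
          rw [hvl]; omega
    rw [hfib, Pi.card_Icc]
    have : ∀ i : Fin n,
        (Finset.Icc (if i = l then t else -((k:ℤ) - |t|)) (if i = l then t else ((k:ℤ) - |t|))).card
        = if i = l then 1 else (2*((k:ℤ) - |t|)+1).toNat := by
      intro i
      by_cases hi : i = l <;> simp only [hi, if_pos, if_neg, if_true, if_false]
      · rw [Int.card_Icc]; simp
      · rw [Int.card_Icc]; congr 1; omega
    rw [Finset.prod_congr rfl (fun i _ => this i)]
    rw [← Finset.mul_prod_erase Finset.univ _ (Finset.mem_univ l)]
    rw [if_pos rfl, one_mul]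
    rw [Finset.prod_congr rfl (fun i hi => if_neg (Finset.mem_erase.mp hi).1),
      Finset.prod_const]
    congr 1
    rw [Finset.card_erase_of_mem (Finset.mem_univ l), Finset.card_univ, Fintype.card_fin]
  · intro v hv
    replace hv : v ∈ F := hv
    simp only [hF, Finset.mem_filter] at hv
    have := hv.2 _ i0ne
    have := abs_nonneg (v ⟨0, by omega⟩)
    rw [Finset.mem_coe, Finset.mem_Icc]
    have : |v l| ≤ (k:ℤ) := by omega
    rw [abs_le] at this; exact this

end Count

lemma sum_Icc_abs (φ : ℤ → ℝ) (hφ : ∀ t, φ (-t) = φ t) (k : ℕ) :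
    ∑ t ∈ Finset.Icc (-(k:ℤ)) (k:ℤ), φ t = φ 0 + 2 * ∑ j ∈ Finset.range k, φ (j+1) := by
  induction k with
  | zero => simp
  | succ k ih =>
    have hins : Finset.Icc (-(k+1:ℕ):ℤ) ((k+1:ℕ):ℤ)
        = insert ((k:ℤ)+1) (insert (-((k:ℤ)+1)) (Finset.Icc (-(k:ℤ)) (k:ℤ))) := by
      ext t
      simp only [Finset.mem_Icc, Finset.mem_insert]
      push_cast
      omega
    rw [hins, Finset.sum_insert, Finset.sum_insert, ih, Finset.sum_range_succ]
    · rw [hφ ((k:ℤ)+1)]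
      push_cast
      ring
    · simp only [Finset.mem_Icc]; omega
    · simp only [Finset.mem_insert, Finset.mem_Icc]; omega

lemma sum_count_eq (k m : ℕ) :
    ((∑ t ∈ Finset.Icc (-(k:ℤ)) (k:ℤ), (2*((k:ℤ) - |t|)+1).toNat ^ m : ℕ) : ℝ)
      = (2*(k:ℝ)+1)^m + 2 * ∑ j ∈ Finset.range k, (2*(j:ℝ)+1)^m := by
  push_cast
  rw [sum_Icc_abs (fun t => ((2*((k:ℤ) - |t|)+1).toNat : ℝ)^m) (by intro t; simp [abs_neg]) k]
  congr 1
  · rw [abs_zero, sub_zero]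
    have h0 : ((2*(k:ℤ)+1).toNat : ℝ) = 2*(k:ℝ)+1 := by
      have h : ((2*(k:ℤ)+1).toNat : ℤ) = 2*(k:ℤ)+1 := Int.toNat_of_nonneg (by omega)
      exact_mod_cast congrArg (Int.cast : ℤ → ℝ) h
    rw [h0]
  · congr 1
    rw [← Finset.sum_range_reflect (fun j => (2*(j:ℝ)+1)^m) k]
    apply Finset.sum_congr rfl
    intro j hj
    rw [Finset.mem_range] at hj
    have h1 : |((j:ℤ)+1)| = (j:ℤ)+1 := abs_of_nonneg (by omega)
    rw [h1]
    have h2 : (2*((k:ℤ) - ((j:ℤ)+1))+1).toNat = 2*(k-1-j)+1 := by omega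
    rw [h2]
    congr 2
    push_cast [Nat.cast_sub (by omega : 1 + j ≤ k)]
    ring_nf

noncomputable def faulhaberPoly (m : ℕ) : ℝ[X] :=
  ∑ i ∈ Finset.range (m+1),
    C (((_root_.bernoulli i : ℚ) : ℝ) * ((m+1).choose i : ℝ) / ((m+1 : ℕ) : ℝ)) * X^(m+1-i)

lemma faulhaber_eval (m N : ℕ) :
    (faulhaberPoly m).eval (N : ℝ) = ∑ x ∈ Finset.range N, (x:ℝ)^m := by
  calc (faulhaberPoly m).eval (N : ℝ)
      = ∑ i ∈ Finset.range (m+1),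
          (((_root_.bernoulli i : ℚ) : ℝ) * ((m+1).choose i : ℝ) / ((m+1 : ℕ) : ℝ)) * (N:ℝ)^(m+1-i) := by
        simp [faulhaberPoly, eval_finset_sum]
    _ = ((∑ i ∈ Finset.range (m+1),
          _root_.bernoulli i * ((m+1).choose i) * (N:ℚ)^(m+1-i)/(m+1) : ℚ) : ℝ) := by
        push_cast
        apply Finset.sum_congr rfl
        intro i _
        ring
    _ = ((∑ x ∈ Finset.range N, (x:ℚ)^m : ℚ) : ℝ) := by rw [← sum_range_pow]
    _ = ∑ x ∈ Finset.range N, (x:ℝ)^m := by push_cast; rfl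

lemma faulhaber_coeff (m : ℕ) : (faulhaberPoly m).coeff 1 = ((_root_.bernoulli m : ℚ) : ℝ) := by
  rw [faulhaberPoly, finset_sum_coeff]
  rw [Finset.sum_eq_single m]
  · simp only [coeff_C_mul, coeff_X_pow]
    rw [if_pos (by omega : 1 = m+1-m), Nat.choose_succ_self_right]
    have : ((m+1 : ℕ) : ℝ) ≠ 0 := by positivity
    field_simp
  · intro i hi hne
    rw [Finset.mem_range] at hi
    simp only [coeff_C_mul, coeff_X_pow]
    rw [if_neg (by omega : ¬(1 = m+1-i))]
    ring
  · intro h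
    exact absurd (Finset.self_mem_range_succ m) h

lemma sum_range_two_mul (m k : ℕ) :
    ∑ x ∈ Finset.range (2*k), (x:ℝ)^m
      = ∑ j ∈ Finset.range k, ((2*(j:ℝ))^m + (2*(j:ℝ)+1)^m) := by
  induction k with
  | zero => simp
  | succ k ih =>
    rw [show 2*(k+1) = 2*k+1+1 by ring, Finset.sum_range_succ, Finset.sum_range_succ, ih,
      Finset.sum_range_succ]
    push_cast
    ring

noncomputable def bpPoly (m : ℕ) : ℝ[X] :=
  ((2:ℝ[X])*X+1)^m + C 2 * ((faulhaberPoly m).comp ((2:ℝ[X])*X) - C ((2:ℝ)^m) * faulhaberPoly m)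

lemma bpPoly_eval (m k : ℕ) :
    (bpPoly m).eval (k:ℝ)
      = (2*(k:ℝ)+1)^m + 2 * ∑ j ∈ Finset.range k, (2*(j:ℝ)+1)^m := by
  have h2k : ((2*k : ℕ) : ℝ) = 2*(k:ℝ) := by push_cast; ring
  have key : (faulhaberPoly m).eval (2*(k:ℝ)) - (2:ℝ)^m * (faulhaberPoly m).eval (k:ℝ)
      = ∑ j ∈ Finset.range k, (2*(j:ℝ)+1)^m := by
    rw [show (2*(k:ℝ)) = ((2*k : ℕ) : ℝ) from h2k.symm, faulhaber_eval, faulhaber_eval,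
      sum_range_two_mul, Finset.mul_sum, Finset.sum_add_distrib]
    have : ∀ j ∈ Finset.range k, (2:ℝ)^m * (j:ℝ)^m = (2*(j:ℝ))^m := by
      intro j _; rw [mul_pow]
    rw [Finset.sum_congr rfl this]
    ring
  simp only [bpPoly, eval_add, eval_mul, eval_pow, eval_ofNat, eval_X, eval_one, eval_C,
    eval_sub, eval_comp]
  rw [key]

lemma coeff_one_eq (p : ℝ[X]) : p.coeff 1 = (derivative p).eval 0 := by
  rw [← coeff_zero_eq_eval_zero, coeff_derivative]
  push_cast
  ring

lemma bpPoly_coeff (m : ℕ) (hm : 1 ≤ m) :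
    (bpPoly m).coeff 1
      = 2*(m:ℝ) + 2*(2*((_root_.bernoulli m : ℚ) : ℝ) - 2^m * ((_root_.bernoulli m : ℚ) : ℝ)) := by
  rw [coeff_one_eq]
  simp only [bpPoly, derivative_add, derivative_pow, derivative_mul, derivative_C,
    derivative_sub, derivative_comp, derivative_X, derivative_one]
  simp only [eval_add, eval_mul, eval_pow, eval_sub, eval_C, eval_X, eval_comp, eval_one,
    eval_ofNat, eval_natCast, zero_mul, mul_zero, add_zero, zero_add, mul_one, mul_zero]
  have hderiv0 : (derivative (faulhaberPoly m)).eval 0 = ((_root_.bernoulli m : ℚ) : ℝ) := by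
    rw [← coeff_one_eq, faulhaber_coeff]
  rw [hderiv0]
  norm_num
  ring_nf


lemma count_val (n : ℕ) (hn : 2 ≤ n) (k : ℕ) (hk : 0 < k) :
    (latticePointCount ((k:ℝ) • bipyramidQ n hn) : ℝ)
      = (2*(k:ℝ)+1)^(n-1) + 2 * ∑ j ∈ Finset.range k, (2*(j:ℝ)+1)^(n-1) := by
  rw [latticePointCount, bipyramid_eq n hn, smul_H n hn k hk]
  have hset : {v : Fin n → ℤ | (fun i => (v i : ℝ)) ∈
        {x : Fin n → ℝ | ∀ i : Fin n, i ≠ ⟨n-1, by omega⟩ →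
          |x i| + |x ⟨n-1, by omega⟩| ≤ (k : ℝ)}}
      = {v : Fin n → ℤ | ∀ i : Fin n, i ≠ ⟨n-1, by omega⟩ →
          |v i| + |v ⟨n-1, by omega⟩| ≤ (k : ℤ)} := by
    ext v
    simp only [Set.mem_setOf_eq]
    refine forall_congr' fun i => forall_congr' fun hi => ?_
    constructor <;> intro h <;> exact_mod_cast h
  rw [hset, latticeSet_eq_finset n hn k, Set.ncard_coe_finset, card_filter_eq n hn k,
    sum_count_eq]

theorem bipyramid_linear_ehrhart_coeff_of_even (n : ℕ) (hn : 2 ≤ n) (heven : Even n)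
    (L : Polynomial ℝ) (hL : IsEhrhartPoly (bipyramidQ n hn) L) :
    L.coeff 1 = 2 * ((n : ℝ) - 1) := by
  set m := n - 1 with hm
  have hm1 : 1 ≤ m := by omega
  have hmodd : Odd m := by
    rcases heven with ⟨r, hr⟩
    exact ⟨r - 1, by omega⟩
  have hLM : L = bpPoly m := by
    apply Polynomial.eq_of_infinite_eval_eq
    apply Set.infinite_of_injective_forall_mem
      (f := fun k : ℕ => ((k+1 : ℕ) : ℝ))
    · intro a b hab
      simp only at hab
      have : (a:ℝ) + 1 = (b:ℝ) + 1 := by exact_mod_cast hab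
      exact_mod_cast add_right_cancel this
    · intro k
      simp only [Set.mem_setOf_eq]
      rw [hL (k+1) (by omega), bpPoly_eval m (k+1)]
      rw [count_val n hn (k+1) (by omega)]
  have hB : 2*(2*((_root_.bernoulli m : ℚ) : ℝ) - 2^m * ((_root_.bernoulli m : ℚ) : ℝ)) = 0 := by
    rcases eq_or_lt_of_le hm1 with h1 | h1
    · rw [← h1]
      norm_num
    · have : _root_.bernoulli m = 0 := by
        rw [bernoulli_eq_bernoulli'_of_ne_one (by omega)]
        exact bernoulli'_eq_zero_of_odd hmodd h1
      rw [this]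
      norm_num
  rw [hLM, bpPoly_coeff m hm1, hB, add_zero]
  have : ((m : ℕ) : ℝ) = (n : ℝ) - 1 := by
    have : (m : ℕ) = n - 1 := hm
    push_cast [this, Nat.cast_sub (by omega : 1 ≤ n)]
    ring
  rw [this]
end

section
/- Let k ≥ 2 and set n = 4k+1. Then the bipyramid Q_n = conv(C_{n-1} × {0} ∪ {e_n, -e_n}) ⊂ ℝ^n is a centrally symmetric lattice polytope whose only interior lattice point is the origin and which satisfies ℓ_1(Q_n) > 2n. In particular, Q_9 satisfies ℓ_1(Q_9) = 494/15 > 18 = ℓ_1(C_9), so Q_9 is a counterexample to Wills' conjecture. -/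
open MeasureTheory Polynomial Pointwise

section WillsCounterexampleAux

open Finset Real

@[reducible] def lastI (n : ℕ) (hn : 2 ≤ n) : Fin n := ⟨n - 1, by omega⟩

def Sset (n : ℕ) (hn : 2 ≤ n) : Set (Fin n → ℝ) :=
  {x | ∀ i, i ≠ lastI n hn → |x i| + |x (lastI n hn)| ≤ 1}

section Geo
variable {n : ℕ} {hn : 2 ≤ n}

lemma zero_ne_lastI : (⟨0, by omega⟩ : Fin n) ≠ lastI n hn := by
  simp only [lastI, Fin.ext_iff, ne_eq]
  omega

lemma convex_Sset : Convex ℝ (Sset n hn) := by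
  intro x hx y hy a b ha hb hab
  intro i hil
  have h1 := hx i hil
  have h2 := hy i hil
  have e1 : (a • x + b • y) i = a * x i + b * y i := rfl
  have e2 : (a • x + b • y) (lastI n hn) = a * x (lastI n hn) + b * y (lastI n hn) := rfl
  rw [e1, e2]
  calc |a * x i + b * y i| + |a * x (lastI n hn) + b * y (lastI n hn)|
      ≤ (|a * x i| + |b * y i|) + (|a * x (lastI n hn)| + |b * y (lastI n hn)|) :=
        add_le_add (abs_add_le _ _) (abs_add_le _ _)
    _ = a * |x i| + b * |y i| + (a * |x (lastI n hn)| + b * |y (lastI n hn)|) := by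
        rw [abs_mul, abs_mul, abs_mul, abs_mul, abs_of_nonneg ha, abs_of_nonneg hb]
    _ ≤ 1 := by nlinarith

lemma bipyramid_eq_Sset : bipyramidQ n hn = Sset n hn := by
  apply le_antisymm
  · apply convexHull_min _ convex_Sset
    rintro x (⟨hx1, hx2⟩ | rfl | rfl) i hil
    · rw [show (⟨n - 1, by omega⟩ : Fin n) = lastI n hn from rfl] at hx2
      rw [hx2, abs_zero, add_zero]; exact hx1 i
    · rw [Pi.single_eq_of_ne hil, Pi.single_eq_same]
      norm_num
    · rw [Pi.neg_apply, Pi.neg_apply, abs_neg, abs_neg,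
        Pi.single_eq_of_ne hil, Pi.single_eq_same]
      norm_num
  · intro x hx
    set l : Fin n := lastI n hn with hl
    have ht : |x l| ≤ 1 :=
      le_trans (le_add_of_nonneg_left (abs_nonneg _)) (hx _ zero_ne_lastI)
    by_cases h2 : |x l| = 1
    · -- x is one of the apexes
      have hzero : ∀ i, i ≠ l → x i = 0 := by
        intro i h
        have := hx i h
        rw [h2] at this
        exact abs_nonpos_iff.mp (by linarith)
      rcases abs_eq (by norm_num : (0:ℝ) ≤ 1) |>.mp h2 with h3 | h3
      · have : x = Pi.single l 1 := by
          funext i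
          by_cases h : i = l
          · rw [h, Pi.single_eq_same]; exact h3
          · rw [Pi.single_eq_of_ne h, hzero i h]
        rw [this]
        exact subset_convexHull ℝ _ (Set.mem_union_right _ (Set.mem_insert _ _))
      · have : x = -Pi.single l 1 := by
          funext i
          by_cases h : i = l
          · rw [h, Pi.neg_apply, Pi.single_eq_same]; exact h3
          · rw [Pi.neg_apply, Pi.single_eq_of_ne h, hzero i h, neg_zero]
        rw [this]
        exact subset_convexHull ℝ _
          (Set.mem_union_right _ (Set.mem_insert_of_mem _ rfl))
    · have hpos : 0 < 1 - |x l| := lt_of_le_of_ne (by linarith) (by intro h; exact h2 (by linarith))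
      set c : Fin n → ℝ := fun i => if i = l then 0 else x i / (1 - |x l|) with hcdef
      set e : Fin n → ℝ := if 0 ≤ x l then Pi.single l 1 else -Pi.single l 1 with hedef
      have hcmem : c ∈ {y : Fin n → ℝ | (∀ i, |y i| ≤ 1) ∧ y ⟨n - 1, by omega⟩ = 0} := by
        constructor
        · intro i
          by_cases h : i = l
          · simp [hcdef, h]
          · have hxi : |x i| ≤ 1 - |x l| := by have := hx i h; linarith
            simp only [hcdef, if_neg h, abs_div, abs_of_pos hpos]
            rw [div_le_one hpos]; exact hxi
        · show c l = 0
          simp [hcdef]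
      have hemem : e ∈ ({Pi.single l (1 : ℝ), -Pi.single l (1 : ℝ)} : Set (Fin n → ℝ)) := by
        rw [hedef]
        by_cases h : 0 ≤ x l
        · rw [if_pos h]; exact Set.mem_insert _ _
        · rw [if_neg h]; exact Set.mem_insert_of_mem _ rfl
      have hxe : x = (1 - |x l|) • c + |x l| • e := by
        funext i
        show x i = (1 - |x l|) * c i + |x l| * e i
        by_cases h : i = l
        · have hcl : c i = 0 := by simp [hcdef, h]
          have hel : e i = if 0 ≤ x l then 1 else -1 := by
            rw [hedef]
            by_cases h3 : 0 ≤ x l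
            · rw [if_pos h3, if_pos h3, h, Pi.single_eq_same]
            · rw [if_neg h3, if_neg h3, h, Pi.neg_apply, Pi.single_eq_same]
          rw [hcl, hel, h]
          by_cases h3 : 0 ≤ x l
          · rw [if_pos h3, abs_of_nonneg h3]; ring
          · rw [if_neg h3, abs_of_neg (not_le.mp h3)]; ring
        · have hel : e i = 0 := by
            rw [hedef]
            by_cases h3 : 0 ≤ x l
            · rw [if_pos h3, Pi.single_eq_of_ne h]
            · rw [if_neg h3, Pi.neg_apply, Pi.single_eq_of_ne h, neg_zero]
          rw [hel]
          simp only [hcdef, if_neg h]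
          field_simp
          ring
      rw [hxe]
      have hseg : (1 - |x l|) • c + |x l| • e ∈ segment ℝ c e :=
        ⟨1 - |x l|, |x l|, by linarith, abs_nonneg _, by ring, rfl⟩
      exact segment_subset_convexHull (Set.mem_union_left _ hcmem)
        (Set.mem_union_right _ hemem) hseg


-- central symmetry
lemma Sset_neg : Sset n hn = -(Sset n hn) := by
  ext x
  simp only [Set.mem_neg, Sset, Set.mem_setOf_eq, Pi.neg_apply, abs_neg]

-- interior characterization
lemma interior_Sset_lattice :
    {v : Fin n → ℤ | (fun i => (v i : ℝ)) ∈ interior (Sset n hn)} = {0} := by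
  ext v
  simp only [Set.mem_setOf_eq, Set.mem_singleton_iff]
  constructor
  · intro hv
    obtain ⟨ε, hε, hball⟩ := Metric.mem_nhds_iff.mp (mem_interior_iff_mem_nhds.mp hv)
    have key : ∀ j : Fin n, j ≠ lastI n hn → v j = 0 ∧ v (lastI n hn) = 0 := by
      intro j hj
      set c : ℝ := if 0 ≤ (v j : ℝ) then 1 else -1 with hc
      set y : Fin n → ℝ := (fun i => (v i : ℝ)) + (ε / 2) • (Pi.single j c : Fin n → ℝ) with hy
      have hyball : y ∈ Metric.ball (fun i => (v i : ℝ)) ε := by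
        rw [Metric.mem_ball]
        rw [dist_pi_lt_iff hε]
        intro i
        rw [Real.dist_eq]
        have : y i - (v i : ℝ) = (ε / 2) * (Pi.single j c : Fin n → ℝ) i := by simp [hy]
        rw [show y i - (v i : ℝ) = y i - (v i : ℝ) from rfl]
        calc |y i - (v i : ℝ)| = (ε/2) * |(Pi.single j c : Fin n → ℝ) i| := by
              rw [this, abs_mul, abs_of_pos (by linarith)]
          _ < ε := by
              have : |(Pi.single j c : Fin n → ℝ) i| ≤ 1 := by
                by_cases h : i = j
                · subst h; rw [Pi.single_eq_same, hc]
                  by_cases h2 : 0 ≤ (v i : ℝ) <;> simp [h2]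
                · rw [Pi.single_eq_of_ne h]; norm_num
              nlinarith
      have hyS := hball hyball
      have h1 := hyS j hj
      have hyj : y j = (v j : ℝ) + (ε/2) * c := by simp [hy]
      have hyl : y (lastI n hn) = (v (lastI n hn) : ℝ) := by
        have : (Pi.single j c : Fin n → ℝ) (lastI n hn) = 0 :=
          @Pi.single_eq_of_ne (Fin n) (fun _ => ℝ) _ _ j (lastI n hn) (Ne.symm hj) c
        simp [hy, this]
      rw [hyj, hyl] at h1
      have habs : |(v j : ℝ)| + ε/2 ≤ |(v j : ℝ) + (ε/2) * c| := by
        rw [hc]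
        by_cases h2 : 0 ≤ (v j : ℝ)
        · rw [if_pos h2, mul_one, abs_of_nonneg h2, abs_of_nonneg (by linarith)]
        · rw [if_neg h2, mul_neg_one, abs_of_neg (not_le.mp h2),
            abs_of_neg (by linarith [not_le.mp h2])]
          ring_nf
          linarith
      have hfin : |(v j : ℝ)| + |(v (lastI n hn) : ℝ)| ≤ 1 - ε/2 := by linarith
      have hint : |v j| + |v (lastI n hn)| < 1 := by
        have : (|v j| : ℝ) + (|v (lastI n hn)| : ℝ) < 1 := by
          push_cast [Int.cast_abs]
          linarith
        exact_mod_cast this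
      have ha := abs_nonneg (v j)
      have hb := abs_nonneg (v (lastI n hn))
      have h1 : |v j| = 0 := by omega
      have h2 : |v (lastI n hn)| = 0 := by omega
      exact ⟨abs_eq_zero.mp h1, abs_eq_zero.mp h2⟩
    funext i
    by_cases h : i = lastI n hn
    · rw [h]; exact (key _ zero_ne_lastI).2
    · exact (key i h).1
  · rintro rfl
    have hsub : {x : Fin n → ℝ | ∀ i, i ≠ lastI n hn → |x i| + |x (lastI n hn)| < 1}
        ⊆ Sset n hn := fun x hx i hi => le_of_lt (hx i hi)
    have hopen : IsOpen {x : Fin n → ℝ | ∀ i, i ≠ lastI n hn → |x i| + |x (lastI n hn)| < 1} := by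
      have : {x : Fin n → ℝ | ∀ i, i ≠ lastI n hn → |x i| + |x (lastI n hn)| < 1} =
          ⋂ i : Fin n, {x | i ≠ lastI n hn → |x i| + |x (lastI n hn)| < 1} := by
        ext x; simp [Set.mem_iInter]
      rw [this]
      apply isOpen_iInter_of_finite
      intro i
      by_cases h : i = lastI n hn
      · simp only [h, ne_eq, not_true_eq_false, false_implies]
        simp [Set.setOf_true]
      · have : {x : Fin n → ℝ | i ≠ lastI n hn → |x i| + |x (lastI n hn)| < 1} =
            {x : Fin n → ℝ | |x i| + |x (lastI n hn)| < 1} := by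
          ext x; simp [h]
        rw [this]
        apply isOpen_lt _ continuous_const
        exact ((continuous_apply i).abs.add (continuous_apply (lastI n hn)).abs)
    apply interior_maximal hsub hopen
    intro i hi
    simp only [Int.cast_zero, Pi.zero_apply]
    norm_num

-- smul characterization
lemma smul_Sset (m : ℕ) (hm : 0 < m) :
    (m : ℝ) • Sset n hn =
      {x : Fin n → ℝ | ∀ i, i ≠ lastI n hn → |x i| + |x (lastI n hn)| ≤ m} := by
  have hm' : (0:ℝ) < m := by exact_mod_cast hm
  ext x
  rw [Set.mem_smul_set_iff_inv_smul_mem₀ (ne_of_gt hm')]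
  simp only [Sset, Set.mem_setOf_eq, Pi.smul_apply, smul_eq_mul]
  constructor
  · intro h i hi
    have := h i hi
    rw [abs_mul, abs_mul, abs_inv, abs_of_pos hm'] at this
    have h2 : (m:ℝ)⁻¹ * (|x i| + |x (lastI n hn)|) ≤ 1 := by linarith [this]
    calc |x i| + |x (lastI n hn)| = m * ((m:ℝ)⁻¹ * (|x i| + |x (lastI n hn)|)) := by
          field_simp
      _ ≤ m * 1 := by exact mul_le_mul_of_nonneg_left h2 (le_of_lt hm')
      _ = m := mul_one _
  · intro h i hi
    have := h i hi
    rw [abs_mul, abs_mul, abs_inv, abs_of_pos hm']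
    have h0 : (0:ℝ) < (m:ℝ)⁻¹ := by positivity
    calc (m:ℝ)⁻¹ * |x i| + (m:ℝ)⁻¹ * |x (lastI n hn)| 
        = (m:ℝ)⁻¹ * (|x i| + |x (lastI n hn)|) := by ring
      _ ≤ (m:ℝ)⁻¹ * m := mul_le_mul_of_nonneg_left this (le_of_lt h0)
      _ = 1 := by field_simp


lemma bipyramid_lattice : IsLatticePolytope (bipyramidQ n hn) := by
  classical
  set l := lastI n hn with hl
  set V : Finset (Fin n → ℤ) :=
    Finset.filter (fun v : Fin n → ℤ => (fun i => (v i : ℝ)) ∈ bipyramidQ n hn)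
      (Finset.Icc (fun _ => -1) (fun _ => 1)) with hV
  refine ⟨V, le_antisymm ?_ ?_⟩
  · -- Q ⊆ hull of V
    apply convexHull_min _ (convex_convexHull ℝ _)
    rintro x (⟨hx1, hx2⟩ | rfl | rfl)
    · -- cube slice
      have hmem : x ∈ Set.pi Set.univ
          (fun i : Fin n => convexHull ℝ (if i = l then {0} else {-1, 1} : Set ℝ)) := by
        intro i _
        show x i ∈ convexHull ℝ (if i = l then {0} else {-1, 1} : Set ℝ)
        split_ifs with h
        · rw [convexHull_singleton]
          show x i = 0
          rw [h]; exact hx2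
        · rw [convexHull_pair, segment_eq_Icc (by norm_num : (-1:ℝ) ≤ 1)]
          exact abs_le.mp (hx1 i)
      rw [← convexHull_pi] at hmem
      refine convexHull_mono ?_ hmem
      -- pi set ⊆ image of V
      intro y hy
      refine ⟨fun i => if i = l then 0 else (if y i = 1 then 1 else -1), ?_, ?_⟩
      · rw [hV]
        simp only [Finset.coe_filter, Set.mem_setOf_eq, Finset.mem_Icc]
        have hyeq : (fun i => ((if i = l then 0 else (if y i = 1 then 1 else -1) : ℤ) : ℝ)) = y := by
          funext i
          have hyi := hy i (Set.mem_univ i)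
          by_cases h : i = l
          · simp only [h, if_pos rfl] at hyi ⊢
            push_cast
            exact hyi.symm
          · simp only [if_neg h, Set.mem_insert_iff, Set.mem_singleton_iff] at hyi
            simp only [if_neg h]
            rcases hyi with h1 | h1
            · rw [if_neg (by rw [h1]; norm_num)]
              push_cast; rw [h1]
            · rw [if_pos h1]
              push_cast; rw [h1]
        constructor
        · constructor <;> intro i <;> by_cases h : i = l <;>
            by_cases h2 : y i = 1 <;> simp [h, h2, Pi.le_def]
        · rw [hyeq]
          apply subset_convexHull
          left
          constructor
          · intro i
            have hyi := hy i (Set.mem_univ i)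
            by_cases h : i = l
            · simp only [h, if_pos rfl] at hyi; rw [h, hyi]; norm_num
            · simp only [if_neg h] at hyi
              rcases hyi with h1 | h1 <;> rw [h1] <;> norm_num
          · have hyl := hy l (Set.mem_univ l)
            simp only [if_pos rfl] at hyl
            exact hyl
      · funext i
        show ((if i = l then 0 else (if y i = 1 then 1 else -1) : ℤ) : ℝ) = y i
        have hyi := hy i (Set.mem_univ i)
        by_cases h : i = l
        · simp only [h, if_pos rfl] at hyi ⊢
          push_cast
          exact hyi.symm
        · simp only [if_neg h, Set.mem_insert_iff, Set.mem_singleton_iff] at hyi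
          simp only [if_neg h]
          rcases hyi with h1 | h1
          · rw [if_neg (by rw [h1]; norm_num)]; push_cast; rw [h1]
          · rw [if_pos h1]; push_cast; rw [h1]
    · -- apex e
      apply subset_convexHull
      have heq : (fun i => ((if i = l then 1 else 0 : ℤ) : ℝ)) = Pi.single l (1:ℝ) := by
        funext i
        split_ifs with h
        · rw [h, Pi.single_eq_same]; norm_num
        · rw [Pi.single_eq_of_ne h]; norm_num
      refine ⟨fun i => if i = l then 1 else 0, ?_, heq⟩
      rw [hV]
      simp only [Finset.coe_filter, Set.mem_setOf_eq, Finset.mem_Icc]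
      constructor
      · constructor <;> intro i <;> by_cases h : i = l <;> simp [h, Pi.le_def]
      · rw [heq]
        exact subset_convexHull ℝ _ (Set.mem_union_right _ (Set.mem_insert _ _))
    · -- apex -e
      apply subset_convexHull
      have heq : (fun i => ((if i = l then -1 else 0 : ℤ) : ℝ)) = -Pi.single l (1:ℝ) := by
        funext i
        split_ifs with h
        · rw [h, Pi.neg_apply, Pi.single_eq_same]; norm_num
        · rw [Pi.neg_apply, Pi.single_eq_of_ne h]; norm_num
      refine ⟨fun i => if i = l then -1 else 0, ?_, heq⟩
      rw [hV]
      simp only [Finset.coe_filter, Set.mem_setOf_eq, Finset.mem_Icc]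
      constructor
      · constructor <;> intro i <;> by_cases h : i = l <;> simp [h, Pi.le_def]
      · rw [heq]
        exact subset_convexHull ℝ _ (Set.mem_union_right _ (Set.mem_insert_of_mem _ rfl))
  · -- hull of V ⊆ Q
    apply convexHull_min _ (convex_convexHull ℝ _)
    rintro x ⟨v, hv, rfl⟩
    rw [hV] at hv
    simp only [Finset.coe_filter, Set.mem_setOf_eq] at hv
    exact hv.2


lemma count_smul_Sset (m : ℕ) (hm : 0 < m) :
    (latticePointCount ((m : ℝ) • Sset n hn) : ℚ) =
      ∑ t ∈ Finset.Icc (-(m:ℤ)) (m:ℤ), (2*(m:ℚ) - 2*|(t:ℚ)| + 1) ^ (n-1) := by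
  classical
  set l := lastI n hn with hl
  set F : Finset (Fin n → ℤ) :=
    (Finset.Icc (fun _ => -(m:ℤ)) (fun _ => (m:ℤ))).filter
      (fun v => ∀ i, i ≠ l → |v i| + |v l| ≤ (m:ℤ)) with hF
  have hset : {v : Fin n → ℤ | (fun i => (v i : ℝ)) ∈ (m : ℝ) • Sset n hn} = ↑F := by
    ext v
    rw [Set.mem_setOf_eq, smul_Sset m hm]
    simp only [Set.mem_setOf_eq, hF, Finset.coe_filter, Finset.mem_Icc]
    constructor
    · intro h
      have hint : ∀ i, i ≠ l → |v i| + |v l| ≤ (m:ℤ) := by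
        intro i hi
        have := h i hi
        have : ((|v i| + |v l| : ℤ) : ℝ) ≤ ((m:ℤ):ℝ) := by push_cast [Int.cast_abs]; push_cast at this; exact this
        exact_mod_cast this
      have hbox : ∀ i, |v i| ≤ (m:ℤ) := by
        intro i
        by_cases hi : i = l
        · have hz := hint _ zero_ne_lastI
          have h0 := abs_nonneg (v (⟨0, by omega⟩ : Fin n))
          rw [hi]
          omega
        · have := hint i hi
          have h0 := abs_nonneg (v l)
          omega
      refine ⟨⟨fun i => ?_, fun i => ?_⟩, hint⟩
      · exact neg_le_of_abs_le (hbox i)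
      · exact le_of_abs_le (hbox i)
    · rintro ⟨-, h2⟩ i hi
      have := h2 i hi
      have hc : ((|v i| + |v l| : ℤ) : ℝ) ≤ ((m:ℤ):ℝ) := by exact_mod_cast this
      push_cast [Int.cast_abs] at hc
      push_cast
      exact hc
  have hncard : latticePointCount ((m : ℝ) • Sset n hn) = F.card := by
    rw [latticePointCount, hset, Set.ncard_coe_finset]
  rw [hncard]
  have hcard : F.card = ∑ t ∈ Finset.Icc (-(m:ℤ)) (m:ℤ),
      ((2*((m:ℤ) - |t|) + 1).toNat) ^ (n-1) := by
    rw [Finset.card_eq_sum_card_fiberwise (f := fun v => v l)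
      (t := Finset.Icc (-(m:ℤ)) (m:ℤ))]
    · apply Finset.sum_congr rfl
      intro t ht
      rw [Finset.mem_Icc] at ht
      have habs : |t| ≤ (m:ℤ) := abs_le.mpr ht
      have hfib : F.filter (fun v => v l = t) =
          Finset.Icc (fun i => if i = l then t else -((m:ℤ) - |t|))
            (fun i => if i = l then t else (m:ℤ) - |t|) := by
        ext v
        simp only [Finset.mem_filter, Finset.mem_Icc, hF, Pi.le_def]
        constructor
        · rintro ⟨⟨⟨hbox1, hbox2⟩, hcon⟩, hvl⟩
          constructor <;> intro i <;> by_cases h : i = l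
          · rw [if_pos h, h]; omega
          · rw [if_neg h]
            have hc := hcon i h
            rw [hvl] at hc
            have h2 := abs_le.mp (by omega : |v i| ≤ (m:ℤ) - |t|)
            omega
          · rw [if_pos h, h]; omega
          · rw [if_neg h]
            have hc := hcon i h
            rw [hvl] at hc
            have h2 := abs_le.mp (by omega : |v i| ≤ (m:ℤ) - |t|)
            omega
        · rintro ⟨hlo, hhi⟩
          have hvl : v l = t := by
            have h1 := hlo l; have h2 := hhi l
            rw [if_pos rfl] at h1 h2
            omega
          have hvi : ∀ i, i ≠ l → |v i| ≤ (m:ℤ) - |t| := by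
            intro i h
            have h1 := hlo i; have h2 := hhi i
            rw [if_neg h] at h1 h2
            exact abs_le.mpr ⟨by omega, h2⟩
          have h00 := abs_nonneg t
          refine ⟨⟨⟨fun i => ?_, fun i => ?_⟩, fun i hi => ?_⟩, hvl⟩
          · by_cases h : i = l
            · rw [h]; omega
            · have h2 := abs_le.mp (hvi i h); omega
          · by_cases h : i = l
            · rw [h]; omega
            · have h2 := abs_le.mp (hvi i h); omega
          · have h2 := hvi i hi
            rw [hvl]
            omega
      rw [hfib, Pi.card_Icc]
      have hprod : ∀ i : Fin n,
          (Finset.Icc (if i = l then t else -((m:ℤ) - |t|)) (if i = l then t else (m:ℤ) - |t|)).card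
          = if i = l then 1 else (2*((m:ℤ) - |t|) + 1).toNat := by
        intro i
        split_ifs with h
        · rw [Int.card_Icc]; omega
        · rw [Int.card_Icc]; congr 1; ring
      rw [Finset.prod_congr rfl (fun i _ => hprod i)]
      rw [← Finset.mul_prod_erase Finset.univ _ (Finset.mem_univ l), if_pos rfl, one_mul]
      rw [Finset.prod_congr rfl (fun i hi => if_neg (Finset.ne_of_mem_erase hi)),
        Finset.prod_const, Finset.card_erase_of_mem (Finset.mem_univ l), Finset.card_univ,
        Fintype.card_fin]
    · intro v hv
      rw [hF, Finset.mem_coe, Finset.mem_filter, Finset.mem_Icc] at hv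
      rw [Finset.mem_coe, Finset.mem_Icc]
      exact ⟨hv.1.1 l, hv.1.2 l⟩
  rw [hcard]
  push_cast
  apply Finset.sum_congr rfl
  intro t ht
  rw [Finset.mem_Icc] at ht
  have habs : |t| ≤ (m:ℤ) := abs_le.mpr ht
  have h0 : (0:ℤ) ≤ 2*((m:ℤ) - |t|) + 1 := by omega
  congr 1
  have h1 := Int.toNat_of_nonneg h0
  calc ((2*((m:ℤ) - |t|) + 1).toNat : ℚ)
      = ((((2*((m:ℤ) - |t|) + 1).toNat : ℤ)) : ℚ) := by norm_cast
    _ = ((2*((m:ℤ) - |t|) + 1 : ℤ) : ℚ) := by rw [h1]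
    _ = 2*(m:ℚ) - 2*|(t:ℚ)| + 1 := by push_cast [Int.cast_abs]; ring


end Geo

lemma sum_Icc_symm (f : ℤ → ℚ) (m : ℕ) :
    ∑ t ∈ Finset.Icc (-(m:ℤ)) (m:ℤ), f t
      = f 0 + ∑ j ∈ Finset.range m, (f (j+1) + f (-(j+1))) := by
  induction m with
  | zero => simp
  | succ m ih =>
    have hins : Finset.Icc (-(m+1:ℕ):ℤ) ((m+1:ℕ):ℤ) =
        insert (-(m+1:ℕ):ℤ) (insert ((m+1:ℕ):ℤ) (Finset.Icc (-(m:ℕ):ℤ) ((m:ℕ):ℤ))) := by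
      ext a
      simp only [Finset.mem_Icc, Finset.mem_insert]
      push_cast
      omega
    rw [hins, Finset.sum_insert, Finset.sum_insert, ih, Finset.sum_range_succ]
    · push_cast
      ring
    · simp only [Finset.mem_Icc]
      push_cast
      omega
    · simp only [Finset.mem_insert, Finset.mem_Icc]
      push_cast
      omega

lemma sum_odd_pow (d m : ℕ) :
    ∑ j ∈ range m, (2*(j:ℚ)+1)^d
      = (∑ k ∈ range (2*m), (k:ℚ)^d) - 2^d * ∑ k ∈ range m, (k:ℚ)^d := by
  induction m with
  | zero => simp
  | succ m ih =>
    have h2 : 2 * (m+1) = (2*m) + 1 + 1 := by ring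
    rw [Finset.sum_range_succ, ih, h2, Finset.sum_range_succ, Finset.sum_range_succ,
      Finset.sum_range_succ]
    push_cast
    ring

noncomputable def faulF (d : ℕ) : ℚ[X] :=
  ∑ i ∈ range (d+1), C (_root_.bernoulli i * ((d+1).choose i) / (d+1)) * X^(d+1-i)

noncomputable def faulG (d : ℕ) : ℚ[X] :=
  ∑ i ∈ range (d+1), C (_root_.bernoulli i * ((d+1).choose i) / (d+1) * 2^(d+1-i)) * X^(d+1-i)

lemma faulF_eval (d N : ℕ) : (faulF d).eval (N:ℚ) = ∑ k ∈ range N, (k:ℚ)^d := by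
  rw [sum_range_pow, faulF, Polynomial.eval_finset_sum]
  apply Finset.sum_congr rfl
  intro i _
  rw [Polynomial.eval_mul, Polynomial.eval_C, Polynomial.eval_pow, Polynomial.eval_X]
  ring

lemma faulG_eval (d N : ℕ) : (faulG d).eval (N:ℚ) = ∑ k ∈ range (2*N), (k:ℚ)^d := by
  rw [sum_range_pow, faulG, Polynomial.eval_finset_sum]
  apply Finset.sum_congr rfl
  intro i _
  rw [Polynomial.eval_mul, Polynomial.eval_C, Polynomial.eval_pow, Polynomial.eval_X]
  push_cast
  rw [mul_pow]
  ring

lemma faul_coeff_one_aux (d : ℕ) (hd : 1 ≤ d) (g : ℕ → ℚ) :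
    (∑ i ∈ range (d+1), C (g i) * X^(d+1-i)).coeff 1 = g d := by
  rw [Polynomial.finset_sum_coeff]
  rw [Finset.sum_eq_single d]
  · rw [Polynomial.coeff_C_mul, Polynomial.coeff_X_pow, if_pos (by omega : (1:ℕ) = d+1-d), mul_one]
  · intro i hi hne
    rw [Finset.mem_range] at hi
    rw [Polynomial.coeff_C_mul, Polynomial.coeff_X_pow, if_neg (by omega : ¬ (1:ℕ) = d+1-i), mul_zero]
  · intro h
    exact absurd (Finset.self_mem_range_succ d) h

lemma faulF_coeff_one (d : ℕ) (hd : 1 ≤ d) : (faulF d).coeff 1 = _root_.bernoulli d := by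
  rw [faulF, faul_coeff_one_aux d hd]
  rw [Nat.choose_succ_self_right]
  field_simp
  rw [Nat.cast_succ]

lemma faulG_coeff_one (d : ℕ) (hd : 1 ≤ d) : (faulG d).coeff 1 = 2 * _root_.bernoulli d := by
  rw [faulG, faul_coeff_one_aux d hd]
  rw [Nat.choose_succ_self_right, (by omega : d + 1 - d = 1), pow_one]
  have : ((d:ℚ) + 1) ≠ 0 := by positivity
  push_cast
  field_simp

lemma pow_linear_coeffs (d : ℕ) :
    ((C (2:ℚ) * X + 1)^d).coeff 0 = 1 ∧ ((C (2:ℚ) * X + 1)^d).coeff 1 = 2*(d:ℚ) := by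
  induction d with
  | zero => simp [Polynomial.coeff_one]
  | succ d ih =>
    have hexp : (C (2:ℚ) * X + 1)^(d+1)
        = (C (2:ℚ) * X + 1)^d + C 2 * ((C (2:ℚ) * X + 1)^d * X) := by ring
    constructor
    · rw [hexp, Polynomial.coeff_add, Polynomial.coeff_C_mul, Polynomial.coeff_mul_X_zero,
        mul_zero, add_zero, ih.1]
    · rw [hexp, Polynomial.coeff_add, Polynomial.coeff_C_mul,
        (by norm_num : (1:ℕ) = 0 + 1), Polynomial.coeff_mul_X, ih.1, ih.2]
      push_cast
      ring

noncomputable def LQpoly (d : ℕ) : ℚ[X] :=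
  (C (2:ℚ) * X + 1)^d + C 2 * (faulG d - C (2^d) * faulF d)

lemma LQpoly_eval (d m : ℕ) :
    (LQpoly d).eval (m:ℚ)
      = (2*(m:ℚ)+1)^d + 2 * ∑ j ∈ range m, (2*(j:ℚ)+1)^d := by
  rw [LQpoly, Polynomial.eval_add, Polynomial.eval_mul, Polynomial.eval_sub,
    Polynomial.eval_mul, Polynomial.eval_C, Polynomial.eval_C, Polynomial.eval_pow,
    Polynomial.eval_add, Polynomial.eval_mul, Polynomial.eval_C, Polynomial.eval_X,
    Polynomial.eval_one, faulF_eval, faulG_eval, sum_odd_pow]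

lemma LQpoly_coeff_one (d : ℕ) (hd : 1 ≤ d) :
    (LQpoly d).coeff 1 = 2*d + (4 - 2^(d+1)) * _root_.bernoulli d := by
  rw [LQpoly, Polynomial.coeff_add, Polynomial.coeff_C_mul, Polynomial.coeff_sub,
    Polynomial.coeff_C_mul, faulF_coeff_one d hd, faulG_coeff_one d hd,
    (pow_linear_coeffs d).2]
  ring


lemma bernoulli_eight : _root_.bernoulli 8 = -1/30 := by
  have h := fun n => _root_.sum_bernoulli n
  have h3 := h 3; have h4 := h 4; have h5 := h 5; have h6 := h 6
  have h7 := h 7; have h8 := h 8; have h9 := h 9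
  simp only [Finset.sum_range_succ, Finset.sum_range_zero, _root_.bernoulli_zero, _root_.bernoulli_one] at h3 h4 h5 h6 h7 h8 h9
  norm_num [Nat.choose] at h3 h4 h5 h6 h7 h8 h9
  linarith

-- (2^(4k+1) - 4) * (4k)! > (2π)^(4k) for k ≥ 2
lemma fact_ineq (k : ℕ) (hk : 2 ≤ k) :
    (2*π)^(4*k) < ((2:ℝ)^(4*k+1) - 4) * (Nat.factorial (4*k) : ℝ) := by
  have hpi : π < 3.15 := pi_lt_d2
  have hpi0 : 0 < π := pi_pos
  induction k with
  | zero => omega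
  | succ k ih =>
    rcases Nat.lt_or_ge k 2 with hk2 | hk2
    · -- k + 1 = 2, base case
      have hk1 : k = 1 := by omega
      subst hk1
      have h1 : (2*π)^8 < (6.3:ℝ)^8 := by
        apply pow_lt_pow_left₀ (by nlinarith) (by positivity) (by norm_num)
      have he : 4*(1+1) = 8 := by norm_num
      rw [he]
      calc (2*π)^8 < (6.3:ℝ)^8 := h1
        _ < ((2:ℝ)^(8+1) - 4) * (Nat.factorial 8 : ℝ) := by
            norm_num [Nat.factorial]
    · have ih2 := ih hk2
      have hfact : (Nat.factorial (4*(k+1)) : ℝ)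
          = ((4*k+4 : ℕ) : ℝ) * ((4*k+3 : ℕ) : ℝ) * ((4*k+2 : ℕ) : ℝ) * ((4*k+1 : ℕ) : ℝ)
            * (Nat.factorial (4*k) : ℝ) := by
        have : 4*(k+1) = (4*k+3)+1 := by ring
        rw [this]
        rw [Nat.factorial_succ, Nat.factorial_succ, Nat.factorial_succ, Nat.factorial_succ]
        push_cast
        ring
      have hP0 : (0:ℝ) < (2*π)^(4*k) := by positivity
      have hF0 : (0:ℝ) < (Nat.factorial (4*k) : ℝ) := by
        exact_mod_cast Nat.factorial_pos (4*k)
      have hA0 : (0:ℝ) < (2:ℝ)^(4*k+1) - 4 := by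
        have : (2:ℝ)^3 ≤ (2:ℝ)^(4*k+1) := by
          apply pow_le_pow_right₀ (by norm_num)
          omega
        norm_num at this ⊢
        linarith
      have hstep1 : (2*π)^(4*(k+1)) < (2*π)^(4*k) * 6561 := by
        have : (2*π)^(4*(k+1)) = (2*π)^(4*k) * (2*π)^4 := by
          rw [← pow_add]; ring_nf
        rw [this]
        apply mul_lt_mul_of_pos_left _ hP0
        have h9 : 2*π < 9 := by linarith
        calc (2*π)^4 < 9^4 := pow_lt_pow_left₀ h9 (by positivity) (by norm_num)
          _ = 6561 := by norm_num
      have hk9 : (9:ℝ) ≤ ((4*k+1 : ℕ) : ℝ) := by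
        push_cast; have : (2:ℝ) ≤ (k:ℝ) := by exact_mod_cast hk2
        linarith
      have hprod : (6561:ℝ) ≤ ((4*k+4 : ℕ) : ℝ) * ((4*k+3 : ℕ) : ℝ) * ((4*k+2 : ℕ) : ℝ)
          * ((4*k+1 : ℕ) : ℝ) := by
        have h1 : (9:ℝ) ≤ ((4*k+4 : ℕ) : ℝ) := by push_cast at hk9 ⊢; linarith
        have h2 : (9:ℝ) ≤ ((4*k+3 : ℕ) : ℝ) := by push_cast at hk9 ⊢; linarith
        have h3 : (9:ℝ) ≤ ((4*k+2 : ℕ) : ℝ) := by push_cast at hk9 ⊢; linarith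
        have p1 : (9:ℝ)*9 ≤ ((4*k+4 : ℕ) : ℝ) * ((4*k+3 : ℕ) : ℝ) :=
          mul_le_mul h1 h2 (by norm_num) (by positivity)
        have p2 : (9:ℝ)*9*9 ≤ ((4*k+4 : ℕ) : ℝ) * ((4*k+3 : ℕ) : ℝ) * ((4*k+2 : ℕ) : ℝ) :=
          mul_le_mul p1 h3 (by norm_num) (by positivity)
        have p3 : (9:ℝ)*9*9*9 ≤ ((4*k+4 : ℕ) : ℝ) * ((4*k+3 : ℕ) : ℝ) * ((4*k+2 : ℕ) : ℝ)
            * ((4*k+1 : ℕ) : ℝ) :=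
          mul_le_mul p2 hk9 (by norm_num) (by positivity)
        linarith
      have hA2 : (2:ℝ)^(4*k+1) - 4 ≤ (2:ℝ)^(4*(k+1)+1) - 4 := by
        have : (2:ℝ)^(4*k+1) ≤ (2:ℝ)^(4*(k+1)+1) := by
          apply pow_le_pow_right₀ (by norm_num)
          omega
        linarith
      calc (2*π)^(4*(k+1)) < (2*π)^(4*k) * 6561 := hstep1
        _ < (((2:ℝ)^(4*k+1) - 4) * (Nat.factorial (4*k) : ℝ)) * 6561 := by
            apply mul_lt_mul_of_pos_right ih2 (by norm_num)
        _ ≤ ((2:ℝ)^(4*k+1) - 4) * (Nat.factorial (4*(k+1)) : ℝ) := by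
            rw [hfact]
            have := mul_le_mul_of_nonneg_left hprod (le_of_lt (mul_pos hA0 hF0))
            calc ((2:ℝ)^(4*k+1) - 4) * (Nat.factorial (4*k) : ℝ) * 6561
                = (((2:ℝ)^(4*k+1) - 4) * (Nat.factorial (4*k) : ℝ)) * 6561 := by ring
              _ ≤ (((2:ℝ)^(4*k+1) - 4) * (Nat.factorial (4*k) : ℝ)) *
                  (((4*k+4 : ℕ) : ℝ) * ((4*k+3 : ℕ) : ℝ) * ((4*k+2 : ℕ) : ℝ) * ((4*k+1 : ℕ) : ℝ)) := by
                  apply mul_le_mul_of_nonneg_left hprod (le_of_lt (mul_pos hA0 hF0))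
              _ = ((2:ℝ)^(4*k+1) - 4) *
                  (((4*k+4 : ℕ) : ℝ) * ((4*k+3 : ℕ) : ℝ) * ((4*k+2 : ℕ) : ℝ) * ((4*k+1 : ℕ) : ℝ)
                    * (Nat.factorial (4*k) : ℝ)) := by ring
        _ ≤ ((2:ℝ)^(4*(k+1)+1) - 4) * (Nat.factorial (4*(k+1)) : ℝ) := by
            apply mul_le_mul_of_nonneg_right hA2
            positivity

-- bernoulli(4k) is very negative
lemma bernoulli_bound (k : ℕ) (hk : 1 ≤ k) :
    ((_root_.bernoulli (4*k) : ℝ)) ≤ -(2 * (Nat.factorial (4*k) : ℝ) / (2*π)^(4*k)) := by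
  have h := hasSum_zeta_nat (k := 2*k) (by omega)
  have h1 : (1:ℝ) ≤ (-1 : ℝ) ^ (2*k + 1) * (2 : ℝ) ^ (2 * (2*k) - 1) * π ^ (2 * (2*k)) *
      (_root_.bernoulli (2 * (2*k)) : ℝ) / (Nat.factorial (2 * (2*k)) : ℝ) := by
    have hle := le_hasSum h 1 (fun j _ => by positivity)
    simpa using hle
  have hneg : (-1 : ℝ) ^ (2*k + 1) = -1 := by
    rw [pow_succ]
    rw [pow_mul]
    norm_num
  rw [hneg] at h1
  have h42 : 2 * (2*k) = 4*k := by ring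
  rw [h42] at h1
  have hfp : (0:ℝ) < (Nat.factorial (4*k) : ℝ) := by exact_mod_cast Nat.factorial_pos (4*k)
  have hpow : (2:ℝ) ^ (4*k - 1) * π ^ (4*k) = (2*π)^(4*k) / 2 := by
    rw [mul_pow]
    have : (2:ℝ)^(4*k) = 2^(4*k-1) * 2 := by
      rw [← pow_succ]
      congr 1
      omega
    rw [this]
    ring
  have h2 : (1:ℝ) ≤ -((2*π)^(4*k) / 2 * (_root_.bernoulli (4*k) : ℝ)) / (Nat.factorial (4*k) : ℝ) := by
    calc (1:ℝ) ≤ -1 * (2:ℝ) ^ (4*k - 1) * π ^ (4*k) * (_root_.bernoulli (4*k) : ℝ) / (Nat.factorial (4*k) : ℝ) := h1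
      _ = -((2:ℝ) ^ (4*k - 1) * π ^ (4*k) * (_root_.bernoulli (4*k) : ℝ)) / (Nat.factorial (4*k) : ℝ) := by ring
      _ = -((2*π)^(4*k) / 2 * (_root_.bernoulli (4*k) : ℝ)) / (Nat.factorial (4*k) : ℝ) := by rw [hpow]
  have hp2 : (0:ℝ) < (2*π)^(4*k) := by positivity
  rw [le_div_iff₀ hfp] at h2
  rw [le_neg]
  rw [div_le_iff₀ hp2]
  nlinarith


-- glue
lemma count_eval (kk m : ℕ) (hkk : 1 ≤ kk) (hm : 0 < m) :
    (latticePointCount ((m:ℝ) • Sset (4*kk+1) (by omega : 2 ≤ 4*kk+1)) : ℚ) = (LQpoly (4*kk)).eval (m:ℚ) := by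
  rw [count_smul_Sset m hm, LQpoly_eval]
  have hn1 : (4*kk+1) - 1 = 4*kk := by omega
  rw [hn1]
  rw [sum_Icc_symm (fun t => (2*(m:ℚ) - 2*|(t:ℚ)| + 1)^(4*kk)) m]
  have hf0 : (2*(m:ℚ) - 2*|((0:ℤ):ℚ)| + 1) ^ (4*kk) = (2*(m:ℚ)+1)^(4*kk) := by norm_num
  have hterm : ∀ j ∈ range m,
      ((fun t : ℤ => (2*(m:ℚ) - 2*|(t:ℚ)| + 1)^(4*kk)) ((j:ℤ)+1)
        + (fun t : ℤ => (2*(m:ℚ) - 2*|(t:ℚ)| + 1)^(4*kk)) (-((j:ℤ)+1)))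
      = 2 * (2*(((m - 1 - j : ℕ)):ℚ)+1)^(4*kk) := by
    intro j hj
    rw [Finset.mem_range] at hj
    have hc : ((m - 1 - j : ℕ):ℚ) = (m:ℚ) - 1 - (j:ℚ) := by
      have h1 : j ≤ m - 1 := by omega
      have h2 : 1 ≤ m := hm
      push_cast [Nat.cast_sub h1, Nat.cast_sub h2]
      ring
    simp only []
    have habs1 : |(((j:ℤ)+1 : ℤ):ℚ)| = (j:ℚ)+1 := by
      push_cast
      rw [abs_of_nonneg (by positivity)]
    have habs2 : |((-((j:ℤ)+1) : ℤ):ℚ)| = (j:ℚ)+1 := by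
      push_cast
      rw [abs_neg, abs_of_nonneg (by positivity)]
    rw [habs1, habs2, hc]
    ring
  rw [Finset.sum_congr rfl hterm, hf0, ← Finset.mul_sum,
    Finset.sum_range_reflect (fun j => (2*((j:ℕ):ℚ)+1)^(4*kk)) m]

theorem main_ineq (k : ℕ) (hk : 2 ≤ k) :
    2 * ((4 * k + 1 : ℕ) : ℝ) < (((LQpoly (4*k)).map (algebraMap ℚ ℝ)).coeff 1) ∧
    (k = 2 → (((LQpoly (4*k)).map (algebraMap ℚ ℝ)).coeff 1) = 494 / 15) := by
  have hco : (((LQpoly (4*k)).map (algebraMap ℚ ℝ)).coeff 1)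
      = 2*(4*k:ℝ) + (4 - 2^(4*k+1)) * ((_root_.bernoulli (4*k) : ℚ) : ℝ) := by
    rw [Polynomial.coeff_map, eq_ratCast, LQpoly_coeff_one (4*k) (by omega)]
    push_cast
    ring
  constructor
  · rw [hco]
    set B : ℝ := ((_root_.bernoulli (4*k) : ℚ) : ℝ) with hB
    have h1 : B ≤ -(2 * (Nat.factorial (4*k) : ℝ) / (2*π)^(4*k)) := bernoulli_bound k (by omega)
    have h2 := fact_ineq k hk
    have hP : (0:ℝ) < (2*π)^(4*k) := by positivity
    have hA : (0:ℝ) < (2:ℝ)^(4*k+1) - 4 := by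
      have : (2:ℝ)^3 ≤ (2:ℝ)^(4*k+1) := by
        apply pow_le_pow_right₀ (by norm_num)
        omega
      norm_num at this
      linarith
    have h1' : 2 * (Nat.factorial (4*k) : ℝ) / (2*π)^(4*k) ≤ -B := by linarith
    have e1 : ((2:ℝ)^(4*k+1) - 4) * (2 * (Nat.factorial (4*k) : ℝ) / (2*π)^(4*k))
        ≤ ((2:ℝ)^(4*k+1) - 4) * (-B) := mul_le_mul_of_nonneg_left h1' hA.le
    have e2 : (2:ℝ) < ((2:ℝ)^(4*k+1) - 4) * (2 * (Nat.factorial (4*k) : ℝ) / (2*π)^(4*k)) := by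
      rw [show ((2:ℝ)^(4*k+1) - 4) * (2 * (Nat.factorial (4*k) : ℝ) / (2*π)^(4*k))
        = 2 * (((2:ℝ)^(4*k+1) - 4) * (Nat.factorial (4*k) : ℝ)) / (2*π)^(4*k) by ring]
      rw [lt_div_iff₀ hP]
      nlinarith
    have h3 : (2:ℝ) < ((2:ℝ)^(4*k+1) - 4) * (-B) := lt_of_lt_of_le e2 e1
    have hcast : ((4*k+1:ℕ):ℝ) = 4*(k:ℝ)+1 := by push_cast; ring
    rw [hcast]
    have h4 : (4 - (2:ℝ)^(4*k+1))*B = ((2:ℝ)^(4*k+1)-4)*(-B) := by ring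
    linarith
  · intro hk2
    subst hk2
    rw [hco]
    norm_num [bernoulli_eight]


end WillsCounterexampleAux

theorem bipyramid_counterexample_to_Wills (k : ℕ) (hk : 2 ≤ k) :
    bipyramidQ (4 * k + 1) (by omega) = -(bipyramidQ (4 * k + 1) (by omega)) ∧
    IsLatticePolytope (bipyramidQ (4 * k + 1) (by omega)) ∧
    {v : Fin (4 * k + 1) → ℤ |
      (fun i => (v i : ℝ)) ∈ interior (bipyramidQ (4 * k + 1) (by omega))} = {0} ∧
    ∃ L : Polynomial ℝ, IsEhrhartPoly (bipyramidQ (4 * k + 1) (by omega)) L ∧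
      2 * ((4 * k + 1 : ℕ) : ℝ) < L.coeff 1 ∧ (k = 2 → L.coeff 1 = 494 / 15) := by
  refine ⟨?_, bipyramid_lattice, ?_, ?_⟩
  · simp only [bipyramid_eq_Sset]
    exact Sset_neg
  · simp only [bipyramid_eq_Sset]
    exact interior_Sset_lattice
  · refine ⟨(LQpoly (4*k)).map (algebraMap ℚ ℝ), ?_, (main_ineq k hk).1, (main_ineq k hk).2⟩
    intro m hm
    rw [show bipyramidQ (4 * k + 1) (by omega) = Sset (4*k+1) (by omega : 2 ≤ 4*k+1) from
      bipyramid_eq_Sset]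
    rw [Polynomial.eval_map, Polynomial.eval₂_at_natCast]
    rw [← count_eval k m (by omega) hm]
    rw [eq_ratCast, Rat.cast_natCast]
end
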